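/- Let A and B be m × m real symmetric positive definite matrices with A ≼ B in the Loewner order (i.e., B − A is positive semidefinite), and let M be an m × m real symmetric positive semidefinite matrix. Then log det(B + M) − log det(B) ≤ log det(A + M) − log det(A). -/

import Mathlib

open Matrix
open scoped MatrixOrder

section Aux

variable {n : Type*} [Fintype n] [DecidableEq n]

/-- If `X` is psd then `1 ≤ det (1 + X)`. -/
lemma aux_one_le_det_one_add {X : Matrix n n ℝ} (hX : X.PosSemidef) :
    1 ≤ (1 + X).det := by
  have hspec := hX.1.spectral_theorem
  set V : Matrix n n ℝ := (hX.1.eigenvectorUnitary : Matrix n n ℝ)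
  have hV : V * star V = 1 := (Matrix.mem_unitaryGroup_iff).mp hX.1.eigenvectorUnitary.2
  have hV' : star V * V = 1 := (Matrix.mem_unitaryGroup_iff').mp hX.1.eigenvectorUnitary.2
  have h1 : (1 : Matrix n n ℝ) + X
      = V * (1 + diagonal (RCLike.ofReal ∘ hX.1.eigenvalues)) * star V := by
    rw [mul_add, add_mul, mul_one, hV]; exact congrArg (1 + ·) hspec
  rw [h1, det_mul, det_mul, mul_comm, ← mul_assoc, ← det_mul, hV', det_one, one_mul]
  have : (1 : Matrix n n ℝ) + diagonal (RCLike.ofReal ∘ hX.1.eigenvalues)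
      = diagonal (fun i => 1 + hX.1.eigenvalues i) := by
    rw [← diagonal_one, diagonal_add]
    congr 1
  rw [this, det_diagonal]
  have h := Finset.prod_le_prod (s := Finset.univ) (f := fun _ => (1 : ℝ))
    (g := fun i => 1 + hX.1.eigenvalues i) (fun i _ => zero_le_one)
    (fun i _ => by show (1:ℝ) ≤ 1 + hX.1.eigenvalues i; linarith [hX.eigenvalues_nonneg i])
  simpa using h

/-- Determinant is monotone: `P` posdef, `E` psd implies `det P ≤ det (P + E)`. -/
lemma aux_det_mono {P E : Matrix n n ℝ} (hP : P.PosDef) (hE : E.PosSemidef) :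
    P.det ≤ (P + E).det := by
  set R := CFC.sqrt E with hRdef
  have hRR : R * R = E := CFC.sqrt_mul_sqrt_self E hE.nonneg
  have hRH : Rᴴ = R := (CFC.sqrt_nonneg E).posSemidef.1
  have hPu : IsUnit P := hP.isUnit
  have hsplit : P + E = P * (1 + P⁻¹ * E) := by
    rw [mul_add, mul_one, ← mul_assoc, Matrix.mul_nonsing_inv _ (hP.det_pos.ne'.isUnit),
      one_mul]
  have hcomm : (1 + P⁻¹ * E).det = (1 + R * (P⁻¹ * R)).det := by
    rw [← hRR, ← mul_assoc, det_one_add_mul_comm]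
  have hpsd : (R * (P⁻¹ * R)).PosSemidef := by
    have := hP.inv.posSemidef.mul_mul_conjTranspose_same R
    rwa [hRH, mul_assoc] at this
  have h1 : 1 ≤ (1 + R * (P⁻¹ * R)).det := aux_one_le_det_one_add hpsd
  calc P.det = P.det * 1 := (mul_one _).symm
    _ ≤ P.det * (1 + R * (P⁻¹ * R)).det := by
        exact mul_le_mul_of_nonneg_left h1 hP.det_pos.le
    _ = (P + E).det := by rw [hsplit, det_mul, hcomm]

/-- Inverse is antitone: `X, Y` posdef with `X - Y` psd implies `Y⁻¹ - X⁻¹` psd. -/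
lemma aux_inv_antitone {X Y : Matrix n n ℝ} (hX : X.PosDef) (hY : Y.PosDef)
    (hXY : (X - Y).PosSemidef) : (Y⁻¹ - X⁻¹).PosSemidef := by
  have hXinv : X⁻¹.PosDef := hX.inv
  set C := CFC.sqrt X⁻¹ with hCdef
  have hCC : C * C = X⁻¹ := CFC.sqrt_mul_sqrt_self X⁻¹ hXinv.posSemidef.nonneg
  have hCH : Cᴴ = C := (CFC.sqrt_nonneg X⁻¹).posSemidef.1
  have hCdet : C.det ≠ 0 := by
    intro h
    have : X⁻¹.det = 0 := by rw [← hCC, det_mul, h, mul_zero]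
    rw [Matrix.det_nonsing_inv] at this
    simp [Ring.inverse_eq_inv'] at this
    exact hX.det_pos.ne' this
  have hCu : IsUnit C.det := isUnit_iff_ne_zero.mpr hCdet
  have hCinv : C * C⁻¹ = 1 := Matrix.mul_nonsing_inv _ hCu
  have hinvC : C⁻¹ * C = 1 := Matrix.nonsing_inv_mul _ hCu
  -- C X C = 1
  have hXC : X = C⁻¹ * C⁻¹ := by
    rw [← Matrix.mul_inv_rev, hCC, Matrix.nonsing_inv_nonsing_inv _ hX.det_pos.ne'.isUnit]
  have hCXC : C * X * C = 1 := by
    rw [hXC, ← mul_assoc, hCinv, one_mul, hinvC]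
  set K := C * Y * C with hKdef
  have hKpsd : K.PosSemidef := by
    have := hY.posSemidef.mul_mul_conjTranspose_same C
    rwa [hCH] at this
  have hKdet : K.det ≠ 0 := by
    rw [hKdef, det_mul, det_mul]
    exact mul_ne_zero (mul_ne_zero hCdet hY.det_pos.ne') hCdet
  have hKu : IsUnit K.det := isUnit_iff_ne_zero.mpr hKdet
  have hKinvpsd : K⁻¹.PosSemidef := hKpsd.inv
  -- 1 - K psd
  have h1K : (1 - K).PosSemidef := by
    have : (1 : Matrix n n ℝ) - K = C * (X - Y) * Cᴴ := by
      rw [hCH, Matrix.mul_sub, Matrix.sub_mul, hCXC, hKdef]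
    rw [this]
    exact hXY.mul_mul_conjTranspose_same C
  -- L := sqrt K⁻¹
  set L := CFC.sqrt K⁻¹ with hLdef
  have hLL : L * L = K⁻¹ := CFC.sqrt_mul_sqrt_self K⁻¹ hKinvpsd.nonneg
  have hLH : Lᴴ = L := (CFC.sqrt_nonneg K⁻¹).posSemidef.1
  have hLdet : L.det ≠ 0 := by
    intro h
    have : K⁻¹.det = 0 := by rw [← hLL, det_mul, h, mul_zero]
    rw [Matrix.det_nonsing_inv] at this
    simp [Ring.inverse_eq_inv'] at this
    exact hKdet this
  have hLu : IsUnit L.det := isUnit_iff_ne_zero.mpr hLdet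
  have hLinv : L * L⁻¹ = 1 := Matrix.mul_nonsing_inv _ hLu
  have hKL : K = L⁻¹ * L⁻¹ := by
    rw [← Matrix.mul_inv_rev, hLL, Matrix.nonsing_inv_nonsing_inv _ hKu]
  have hLKL : L * K * L = 1 := by
    have hinvL : L⁻¹ * L = 1 := Matrix.nonsing_inv_mul _ hLu
    rw [hKL, ← mul_assoc, hLinv, one_mul, hinvL]
  -- K⁻¹ - 1 psd
  have hKinv1 : (K⁻¹ - 1).PosSemidef := by
    have : K⁻¹ - 1 = L * (1 - K) * Lᴴ := by
      rw [hLH, Matrix.mul_sub, Matrix.sub_mul, mul_one, hLL, hLKL]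
    rw [this]
    exact h1K.mul_mul_conjTranspose_same L
  -- Y⁻¹ = C K⁻¹ C
  have hYinv : Y⁻¹ = C * K⁻¹ * C := by
    have hKinv : K⁻¹ = C⁻¹ * Y⁻¹ * C⁻¹ := by
      rw [hKdef, Matrix.mul_inv_rev, Matrix.mul_inv_rev]
      rw [mul_assoc]
    rw [hKinv, ← mul_assoc, ← mul_assoc, hCinv, one_mul, mul_assoc, hinvC, mul_one]
  have hfinal : Y⁻¹ - X⁻¹ = C * (K⁻¹ - 1) * Cᴴ := by
    rw [hCH, Matrix.mul_sub, Matrix.sub_mul, mul_one, hCC, hYinv]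
  rw [hfinal]
  exact hKinv1.mul_mul_conjTranspose_same C

end Aux

/-- If `A ≼ B` are symmetric positive definite matrices and `M`
is symmetric positive semidefinite, then
`log det(B + M) − log det B ≤ log det(A + M) − log det A`. -/
theorem stmt_9 {m : ℕ}
    (A B M : Matrix (Fin m) (Fin m) ℝ)
    (hA : A.PosDef) (hB : B.PosDef)
    (hAB : (B - A).PosSemidef)
    (hM : M.PosSemidef) :
    Real.log (B + M).det - Real.log B.det ≤
      Real.log (A + M).det - Real.log A.det := by
  have hAM : (A + M).PosDef := hA.add_posSemidef hM
  have hBM : (B + M).PosDef := hB.add_posSemidef hM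
  have hdA := hA.det_pos
  have hdB := hB.det_pos
  have hdAM := hAM.det_pos
  have hdBM := hBM.det_pos
  rw [sub_le_sub_iff, ← Real.log_mul hdBM.ne' hdA.ne', ← Real.log_mul hdAM.ne' hdB.ne']
  refine Real.log_le_log (by positivity) ?_
  -- key: det (B+M) * det A ≤ det (A+M) * det B
  set R := CFC.sqrt (B - A) with hRdef
  have hRR : R * R = B - A := CFC.sqrt_mul_sqrt_self (B - A) hAB.nonneg
  have hRH : Rᴴ = R := (CFC.sqrt_nonneg (B - A)).posSemidef.1
  set S := R * A⁻¹ * R with hSdef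
  set T := R * (A + M)⁻¹ * R with hTdef
  have hSpsd : S.PosSemidef := by
    have := hA.inv.posSemidef.mul_mul_conjTranspose_same R
    rwa [hRH] at this
  have hTpsd : T.PosSemidef := by
    have := hAM.inv.posSemidef.mul_mul_conjTranspose_same R
    rwa [hRH] at this
  -- det B = det A * det (1 + S)
  have hdetB : B.det = A.det * (1 + S).det := by
    have hsplit : B = A * (1 + A⁻¹ * (R * R)) := by
      rw [mul_add, mul_one, ← mul_assoc, Matrix.mul_nonsing_inv _ hA.det_pos.ne'.isUnit,
        one_mul, hRR, add_sub_cancel]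
    rw [hsplit, det_mul, ← mul_assoc, det_one_add_mul_comm, hSdef, mul_assoc]
  have hdetBM : (B + M).det = (A + M).det * (1 + T).det := by
    have hsplit : B + M = (A + M) * (1 + (A + M)⁻¹ * (R * R)) := by
      rw [mul_add, mul_one, ← mul_assoc, Matrix.mul_nonsing_inv _ hAM.det_pos.ne'.isUnit,
        one_mul, hRR]
      abel
    rw [hsplit, det_mul, ← mul_assoc, det_one_add_mul_comm, hTdef, mul_assoc]
  -- S - T psd
  have hST : (S - T).PosSemidef := by
    have hinv : (A⁻¹ - (A + M)⁻¹).PosSemidef := by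
      refine aux_inv_antitone hAM hA ?_
      simpa using hM
    have : S - T = R * (A⁻¹ - (A + M)⁻¹) * Rᴴ := by
      rw [hRH, Matrix.mul_sub, Matrix.sub_mul, hSdef, hTdef]
    rw [this]
    exact hinv.mul_mul_conjTranspose_same R
  have h1T : (1 + T).PosDef := Matrix.PosDef.one.add_posSemidef hTpsd
  have hmono : (1 + T).det ≤ (1 + S).det := by
    have := aux_det_mono h1T hST
    have heq : 1 + T + (S - T) = 1 + S := by abel
    rwa [heq] at this
  calc (B + M).det * A.det = (A + M).det * (1 + T).det * A.det := by rw [hdetBM]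
    _ ≤ (A + M).det * (1 + S).det * A.det := by
        exact mul_le_mul_of_nonneg_right
          (mul_le_mul_of_nonneg_left hmono hdAM.le) hdA.le
    _ = (A + M).det * B.det := by rw [hdetB]; ring
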